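/- Let n ≥ 2 and k ≥ 1 be integers with k dividing n, set m = n/k, and let S_i = {(i−1)·m+1, …, i·m} for i = 1,…,k be the partition of {1,…,n} into k consecutive blocks of m positions each. If C ⊆ {1,…,n} contains exactly one element of each block S_i (so |C| = k), then EMD(C) ≤ (n−k) / (2·(n−1)·k). -/

import Mathlib

private lemma gauss_aux (p : ℕ) : 2 * ∑ r ∈ Finset.Icc 1 p, (r : ℤ) = p * (p + 1) := by
  induction p with
  | zero => simp
  | succ q ih =>
    rw [Finset.sum_Icc_succ_top (by omega : 1 ≤ q + 1)]
    push_cast at ih ⊢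
    linarith

private lemma aux_block (m ρ : ℕ) (hρ1 : 1 ≤ ρ) (hρm : ρ ≤ m) :
    2 * ∑ r ∈ Finset.Icc 1 m, (if ρ ≤ r then (m : ℤ) - r else (r : ℤ)) ≤ m * ((m : ℤ) - 1) := by
  have hsplit : Finset.Icc 1 m = Finset.Icc 1 (ρ - 1) ∪ Finset.Icc ρ m := by
    ext x; simp; omega
  have hdisj : Disjoint (Finset.Icc 1 (ρ - 1)) (Finset.Icc ρ m) := by
    rw [Finset.disjoint_left]; intro x hx hx'; simp at hx hx'; omega
  have h1 : ∑ r ∈ Finset.Icc 1 (ρ - 1), (if ρ ≤ r then (m : ℤ) - r else (r : ℤ))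
      = ∑ r ∈ Finset.Icc 1 (ρ - 1), (r : ℤ) := by
    apply Finset.sum_congr rfl; intro x hx; simp at hx; rw [if_neg (by omega)]
  have h2 : ∑ r ∈ Finset.Icc ρ m, (if ρ ≤ r then (m : ℤ) - r else (r : ℤ))
      = ∑ r ∈ Finset.Icc ρ m, ((m : ℤ) - r) := by
    apply Finset.sum_congr rfl; intro x hx; simp at hx; rw [if_pos (by omega)]
  have hsum2 : ∑ r ∈ Finset.Icc ρ m, (r : ℤ)
      = ∑ r ∈ Finset.Icc 1 m, (r : ℤ) - ∑ r ∈ Finset.Icc 1 (ρ - 1), (r : ℤ) := by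
    rw [hsplit, Finset.sum_union hdisj]; ring
  have hcardm : (Finset.Icc ρ m).card = m - ρ + 1 := by rw [Nat.card_Icc]; omega
  have hconst : ∑ r ∈ Finset.Icc ρ m, ((m : ℤ) - r)
      = ((m - ρ + 1 : ℕ) : ℤ) * m - ∑ r ∈ Finset.Icc ρ m, (r : ℤ) := by
    rw [Finset.sum_sub_distrib, Finset.sum_const, hcardm]; push_cast; ring
  rw [hsplit, Finset.sum_union hdisj, h1, h2, hconst, hsum2]
  have g1 := gauss_aux m
  have g2 := gauss_aux (ρ - 1)
  have hc : ((ρ - 1 : ℕ) : ℤ) = (ρ : ℤ) - 1 := by omega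
  have hc2 : ((m - ρ + 1 : ℕ) : ℤ) = (m : ℤ) - ρ + 1 := by omega
  rw [hc] at g2
  rw [hc2]
  nlinarith [mul_nonneg (by omega : (0:ℤ) ≤ (ρ:ℤ) - 1) (by omega : (0:ℤ) ≤ (m:ℤ) - ρ)]

private lemma sum_blocks_aux (m : ℕ) (f : ℕ → ℤ) :
    ∀ K, ∑ i ∈ Finset.Icc 1 (K * m), f i
      = ∑ t ∈ Finset.range K, ∑ r ∈ Finset.Icc 1 m, f (t * m + r) := by
  intro K
  induction K with
  | zero => simp
  | succ q ih =>
    have hM : (q + 1) * m = q * m + m := by ring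
    have hdec : Finset.Icc 1 ((q + 1) * m)
        = Finset.Icc 1 (q * m) ∪ Finset.Ioc (q * m) (q * m + m) := by
      ext x; simp [hM]; omega
    have hdisj : Disjoint (Finset.Icc 1 (q * m)) (Finset.Ioc (q * m) (q * m + m)) := by
      rw [Finset.disjoint_left]; intro x hx hx'; simp at hx hx'; omega
    have hmap : Finset.Ioc (q * m) (q * m + m)
        = Finset.map (addLeftEmbedding (q * m)) (Finset.Icc 1 m) := by
      rw [Finset.map_add_left_Icc]
      ext x; simp [Finset.Icc_add_one_left_eq_Ioc]
    rw [hdec, Finset.sum_union hdisj, ih, Finset.sum_range_succ, hmap, Finset.sum_map]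
    simp [addLeftEmbedding_apply]

/-- The Earth Mover's Distance (with the ordered distance) between the uniform
distribution on a cluster `C ⊆ {1,…,n}` of `k` records and the uniform
distribution on the whole data set `{1,…,n}`. -/
noncomputable def EMD (n k : ℕ) (C : Finset ℕ) : ℝ :=
  (1 / ((n : ℝ) - 1)) * ∑ i ∈ Finset.Icc 1 n,
    |∑ j ∈ Finset.Icc 1 i, ((if j ∈ C then (1 : ℝ) / k else 0) - 1 / n)|

/-- If `k ∣ n`, `m = n/k`, and the cluster `C ⊆ {1,…,n}` contains exactly one
element of each consecutive block `S_i = {(i−1)m+1, …, im}` (so `|C| = k`),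
then `EMD(C) ≤ (n−k)/(2(n−1)k)`. -/
theorem emd_upper_bound (n k m : ℕ) (hn : 2 ≤ n) (hk : 1 ≤ k)
    (hdvd : k ∣ n) (hm : m = n / k)
    (C : Finset ℕ) (hC : C ⊆ Finset.Icc 1 n)
    (hone : ∀ i ∈ Finset.Icc 1 k,
      (C ∩ Finset.Icc ((i - 1) * m + 1) (i * m)).card = 1)
    (hcard : C.card = k) :
    EMD n k C ≤ ((n : ℝ) - k) / (2 * ((n : ℝ) - 1) * k) := by
  have hnk : n = k * m := by rw [hm, Nat.mul_div_cancel' hdvd]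
  have hm1 : 1 ≤ m := by
    rcases Nat.eq_zero_or_pos m with h | h
    · subst h; simp at hnk; omega
    · exact h
  set N : ℕ → ℕ := fun i => (C ∩ Finset.Icc 1 i).card with hN
  -- the partial sums of counts at the block boundaries
  have hNblock : ∀ t, t ≤ k → N (t * m) = t := by
    intro t
    induction t with
    | zero => intro _; simp [hN]
    | succ q ih =>
      intro hq
      have hM : (q + 1) * m = q * m + m := by ring
      have hdec : Finset.Icc 1 ((q + 1) * m)
          = Finset.Icc 1 (q * m) ∪ Finset.Ioc (q * m) (q * m + m) := by
        ext x; simp [hM]; omega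
      have hdisj : Disjoint (C ∩ Finset.Icc 1 (q * m)) (C ∩ Finset.Ioc (q * m) (q * m + m)) := by
        rw [Finset.disjoint_left]; intro x hx hx'
        simp at hx hx'; omega
      have h1 := hone (q + 1) (by simp; omega)
      have he : Finset.Icc ((q + 1 - 1) * m + 1) ((q + 1) * m) = Finset.Ioc (q * m) (q * m + m) := by
        rw [show q + 1 - 1 = q from rfl, hM, Finset.Icc_add_one_left_eq_Ioc]
      rw [he] at h1
      have : N ((q + 1) * m) = N (q * m) + (C ∩ Finset.Ioc (q * m) (q * m + m)).card := by
        simp only [hN]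
        rw [hdec, Finset.inter_union_distrib_left, Finset.card_union_of_disjoint hdisj]
      rw [this, h1, ih (by omega)]
  -- the ℤ-valued sum bound
  have hblocksum : ∀ t, t < k →
      2 * ∑ r ∈ Finset.Icc 1 m, |(m : ℤ) * N (t * m + r) - (t * m + r)| ≤ m * ((m : ℤ) - 1) := by
    intro t ht
    have h1 := hone (t + 1) (by simp; omega)
    have he : Finset.Icc ((t + 1 - 1) * m + 1) ((t + 1) * m) = Finset.Icc (t * m + 1) (t * m + m) := by
      rw [show t + 1 - 1 = t from rfl, show (t + 1) * m = t * m + m from by ring]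
    rw [he] at h1
    obtain ⟨c, hc⟩ := Finset.card_eq_one.mp h1
    have hcmem : c ∈ C ∩ Finset.Icc (t * m + 1) (t * m + m) := by rw [hc]; simp
    have hcb : t * m + 1 ≤ c ∧ c ≤ t * m + m := by
      simp at hcmem; omega
    set ρ := c - t * m with hρ
    have hρ1 : 1 ≤ ρ := by omega
    have hρm : ρ ≤ m := by omega
    have key : ∀ r ∈ Finset.Icc 1 m,
        |(m : ℤ) * N (t * m + r) - (t * m + r)| = (if ρ ≤ r then (m : ℤ) - r else (r : ℤ)) := by
      intro r hr
      simp only [Finset.mem_Icc] at hr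
      -- N (t*m+r) = t + d where d = card of C ∩ Icc (t*m+1) (t*m+r)
      have hdec : Finset.Icc 1 (t * m + r)
          = Finset.Icc 1 (t * m) ∪ Finset.Icc (t * m + 1) (t * m + r) := by
        ext x; simp; omega
      have hdisj : Disjoint (C ∩ Finset.Icc 1 (t * m)) (C ∩ Finset.Icc (t * m + 1) (t * m + r)) := by
        rw [Finset.disjoint_left]; intro x hx hx'
        simp at hx hx'; omega
      have hNr : N (t * m + r) = t + (C ∩ Finset.Icc (t * m + 1) (t * m + r)).card := by
        have : N (t * m + r) = N (t * m) + (C ∩ Finset.Icc (t * m + 1) (t * m + r)).card := by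
          simp only [hN]
          rw [hdec, Finset.inter_union_distrib_left, Finset.card_union_of_disjoint hdisj]
        rw [this, hNblock t (by omega)]
      have hsub : C ∩ Finset.Icc (t * m + 1) (t * m + r)
          = (C ∩ Finset.Icc (t * m + 1) (t * m + m)) ∩ Finset.Icc (t * m + 1) (t * m + r) := by
        ext x; simp; intro _ h2 h3; exact ⟨h2, by omega⟩
      have hd : (C ∩ Finset.Icc (t * m + 1) (t * m + r)).card = if ρ ≤ r then 1 else 0 := by
        rw [hsub, hc]
        by_cases hcr : c ≤ t * m + r
        · rw [if_pos (by omega)]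
          have : {c} ∩ Finset.Icc (t * m + 1) (t * m + r) = {c} := by
            ext x; simp; rintro rfl; omega
          rw [this]; simp
        · rw [if_neg (by omega)]
          have : {c} ∩ Finset.Icc (t * m + 1) (t * m + r) = ∅ := by
            ext x; simp; rintro rfl; omega
          rw [this]; simp
      rw [hNr, hd]
      by_cases hre : ρ ≤ r
      · rw [if_pos hre, if_pos hre]
        push_cast
        rw [show (m : ℤ) * (t + 1) - (t * m + r) = (m : ℤ) - r by ring]
        exact abs_of_nonneg (by push_cast; omega)
      · rw [if_neg hre, if_neg hre]
        push_cast
        rw [show (m : ℤ) * (t + 0) - (t * m + r) = -(r : ℤ) by ring]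
        rw [abs_neg]
        exact abs_of_nonneg (by positivity)
    rw [Finset.sum_congr rfl key]
    exact aux_block m ρ hρ1 hρm
  -- total ℤ sum
  have hZ : 2 * ∑ i ∈ Finset.Icc 1 n, |(m : ℤ) * N i - i| ≤ k * (m * ((m : ℤ) - 1)) := by
    rw [hnk, sum_blocks_aux m (fun i => |(m : ℤ) * N i - i|) k, Finset.mul_sum]
    calc ∑ t ∈ Finset.range k, 2 * ∑ r ∈ Finset.Icc 1 m, |(m : ℤ) * N (t * m + r) - (t * m + r)|
        ≤ ∑ _t ∈ Finset.range k, m * ((m : ℤ) - 1) := by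
          apply Finset.sum_le_sum
          intro t ht
          exact hblocksum t (Finset.mem_range.mp ht)
      _ = k * (m * ((m : ℤ) - 1)) := by
          rw [Finset.sum_const, Finset.card_range, nsmul_eq_mul]
  -- convert to ℝ
  have hk0 : (0 : ℝ) < k := by exact_mod_cast hk
  have hm0 : (0 : ℝ) < m := by exact_mod_cast hm1
  have hn1 : (0 : ℝ) < (n : ℝ) - 1 := by
    have : (2 : ℝ) ≤ n := by exact_mod_cast hn
    linarith
  have habs : ∀ i ∈ Finset.Icc 1 n,
      |∑ j ∈ Finset.Icc 1 i, ((if j ∈ C then (1 : ℝ) / k else 0) - 1 / n)|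
      = |(m : ℝ) * (N i : ℝ) - (i : ℝ)| / ((m : ℝ) * k) := by
    intro i _
    have hsum : ∑ j ∈ Finset.Icc 1 i, ((if j ∈ C then (1 : ℝ) / k else 0) - 1 / n)
        = (N i : ℝ) / k - i / n := by
      rw [Finset.sum_sub_distrib]
      congr 1
      · rw [Finset.sum_ite_mem, Finset.sum_const]
        have : (Finset.Icc 1 i ∩ C).card = N i := by
          rw [Finset.inter_comm]
        rw [this]
        simp [div_eq_mul_inv]
      · rw [Finset.sum_const, Nat.card_Icc]
        simp [div_eq_mul_inv]
    rw [hsum]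
    have hne : ((n : ℝ)) = (k : ℝ) * m := by exact_mod_cast hnk
    have heq : (N i : ℝ) / k - i / n = ((m : ℝ) * N i - i) / ((m : ℝ) * k) := by
      rw [hne]; field_simp
    rw [heq, abs_div, abs_of_pos (by positivity : (0:ℝ) < (m : ℝ) * k)]
  rw [EMD, Finset.sum_congr rfl habs]
  rw [← Finset.sum_div]
  have hZR : (∑ i ∈ Finset.Icc 1 n, |(m : ℝ) * (N i : ℝ) - (i : ℝ)|)
      ≤ (k : ℝ) * ((m : ℝ) * ((m : ℝ) - 1)) / 2 := by
    have h2 : ((2 * ∑ i ∈ Finset.Icc 1 n, |(m : ℤ) * N i - i| : ℤ) : ℝ)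
        ≤ ((k * (m * ((m : ℤ) - 1)) : ℤ) : ℝ) := by exact_mod_cast hZ
    push_cast at h2
    linarith
  have hRHS : ((n : ℝ) - k) / (2 * ((n : ℝ) - 1) * k) = ((m : ℝ) - 1) / (2 * ((n : ℝ) - 1)) := by
    have hne : ((n : ℝ)) = (k : ℝ) * m := by exact_mod_cast hnk
    rw [div_eq_div_iff (by positivity) (by positivity), hne]; ring
  rw [hRHS]
  have hstep : (∑ i ∈ Finset.Icc 1 n, |(m : ℝ) * (N i : ℝ) - (i : ℝ)|) / ((m : ℝ) * k)
      ≤ ((m : ℝ) - 1) / 2 := by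
    rw [div_le_div_iff₀ (by positivity) (by norm_num)]
    calc (∑ i ∈ Finset.Icc 1 n, |(m : ℝ) * (N i : ℝ) - (i : ℝ)|) * 2
        ≤ ((k : ℝ) * ((m : ℝ) * ((m : ℝ) - 1)) / 2) * 2 := by linarith
      _ = ((m : ℝ) - 1) * ((m : ℝ) * k) := by ring
  rw [one_div, inv_mul_le_iff₀ hn1]
  calc (∑ i ∈ Finset.Icc 1 n, |(m : ℝ) * (N i : ℝ) - (i : ℝ)|) / ((m : ℝ) * k)
      ≤ ((m : ℝ) - 1) / 2 := hstep
    _ = ((n : ℝ) - 1) * (((m : ℝ) - 1) / (2 * ((n : ℝ) - 1))) := by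
        field_simp
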